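/- arXiv:1811.08540 — 4 statements merged into one kernel-verified Lean document; each statement's English description precedes it below -/
import Mathlib

section
/- Under the assumption that the test class F contains, for every model M, a function f_M with f_M(x,a,r,x') = r + V_M(x'), the simulation gap is bounded by the sum of witnessed model misfits: v_M − v^{π_M} ≤ Σ_{h=1}^H W(M, M, h), where W(M, M', h) = max_{f∈F} E_{x_h∼π_M, a_h∼π_{M'}}[E_{(r,x')∼M'_h}[f(x_h,a_h,r,x')] − E_{(r,x')∼M*_h}[f(x_h,a_h,r,x')]]. -/
/-- Simulation bound via witnessed model misfit: if the test class `F` contains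
`(x,a,r,x') ↦ r + V_M(x')` at every level, then the simulation gap `v_M − v^{π_M}`
is bounded by the sum over time steps of the witnessed model misfits
`W(M,M,h) = max_{f ∈ F} E_{x_h∼π_M, a_h∼π_M}[E_{M}[f] − E_{M*}[f]]`. -/
theorem simulation_le_witness_misfit (X A Rw : Type*)
    [Fintype X] [Fintype A] [Fintype Rw] (H : ℕ)
    (rval : Rw → ℝ)                                -- reward values
    (P0 : X → ℝ) (hP00 : ∀ x, 0 ≤ P0 x) (hP01 : ∑ x, P0 x = 1)
    (M Mstar : ℕ → X → A → Rw × X → ℝ)             -- model / true joint (r, x') kernels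
    (hM : ∀ h x a p, 0 ≤ M h x a p) (hMs : ∀ h x a, ∑ p, M h x a p = 1)
    (hMst : ∀ h x a p, 0 ≤ Mstar h x a p) (hMsts : ∀ h x a, ∑ p, Mstar h x a p = 1)
    (π : ℕ → X → A)                                 -- π_M
    (V Vpi : ℕ → X → ℝ)                             -- V_M and true value of π_M
    (d : ℕ → X → ℝ)                                 -- roll-in distribution of π_M in M*
    (hVH : ∀ x, V H x = 0) (hVpiH : ∀ x, Vpi H x = 0)
    (hV : ∀ h < H, ∀ x,
      V h x = ∑ p : Rw × X, M h x (π h x) p * (rval p.1 + V (h + 1) p.2))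
    (hVpi : ∀ h < H, ∀ x,
      Vpi h x = ∑ p : Rw × X, Mstar h x (π h x) p * (rval p.1 + Vpi (h + 1) p.2))
    (hd0 : ∀ x, d 0 x = P0 x)
    (hdS : ∀ h < H, ∀ x',
      d (h + 1) x' = ∑ x, ∑ r : Rw, d h x * Mstar h x (π h x) (r, x'))
    (F : Finset (X → A → Rw → X → ℝ)) (hne : F.Nonempty)
    (hreal : ∀ h < H, (fun (_ : X) (_ : A) (r : Rw) (x' : X) =>
        rval r + V (h + 1) x') ∈ F) :
    (∑ x, P0 x * V 0 x) - (∑ x, P0 x * Vpi 0 x) ≤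
      ∑ h ∈ Finset.range H, F.sup' hne (fun f =>
        ∑ x, d h x * ∑ p : Rw × X,
          (M h x (π h x) p - Mstar h x (π h x) p) * f x (π h x) p.1 p.2) := by
  classical
  set D : ℕ → ℝ := fun h => ∑ x, d h x * (V h x - Vpi h x) with hD
  set EB : ℕ → ℝ := fun h => ∑ x, d h x * ∑ p : Rw × X,
      (M h x (π h x) p - Mstar h x (π h x) p) * (rval p.1 + V (h + 1) p.2) with hEB
  have hDH : D H = 0 := by simp [hD, hVH, hVpiH]
  have swap3 : ∀ (g : X → Rw → X → ℝ),
      (∑ x, ∑ r : Rw, ∑ x', g x r x') = ∑ x', ∑ x, ∑ r : Rw, g x r x' := by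
    intro g
    rw [show (∑ x, ∑ r : Rw, ∑ x', g x r x') = ∑ x, ∑ x', ∑ r : Rw, g x r x' from
      Finset.sum_congr rfl fun x _ => Finset.sum_comm, Finset.sum_comm]
  have hstep : ∀ h < H, D h = EB h + D (h + 1) := by
    intro h hh
    have key : ∀ x, V h x - Vpi h x =
        (∑ p : Rw × X, (M h x (π h x) p - Mstar h x (π h x) p) * (rval p.1 + V (h + 1) p.2))
        + ∑ p : Rw × X, Mstar h x (π h x) p * (V (h + 1) p.2 - Vpi (h + 1) p.2) := by
      intro x
      rw [hV h hh x, hVpi h hh x, ← Finset.sum_sub_distrib, ← Finset.sum_add_distrib]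
      exact Finset.sum_congr rfl fun p _ => by ring
    have h2 : (∑ x, d h x * ∑ p : Rw × X,
        Mstar h x (π h x) p * (V (h + 1) p.2 - Vpi (h + 1) p.2)) = D (h + 1) := by
      show _ = ∑ x', d (h + 1) x' * (V (h + 1) x' - Vpi (h + 1) x')
      calc (∑ x, d h x * ∑ p : Rw × X,
            Mstar h x (π h x) p * (V (h + 1) p.2 - Vpi (h + 1) p.2))
          = ∑ x, ∑ r : Rw, ∑ x',
              d h x * Mstar h x (π h x) (r, x') * (V (h + 1) x' - Vpi (h + 1) x') := by
            simp only [Fintype.sum_prod_type, Finset.mul_sum, mul_assoc]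
        _ = ∑ x', ∑ x, ∑ r : Rw,
              d h x * Mstar h x (π h x) (r, x') * (V (h + 1) x' - Vpi (h + 1) x') := swap3 _
        _ = ∑ x', d (h + 1) x' * (V (h + 1) x' - Vpi (h + 1) x') := by
            refine Finset.sum_congr rfl fun x' _ => ?_
            rw [hdS h hh x', Finset.sum_mul]
            exact Finset.sum_congr rfl fun x _ => by rw [Finset.sum_mul]
    calc D h = ∑ x, d h x * ((∑ p : Rw × X, (M h x (π h x) p - Mstar h x (π h x) p)
          * (rval p.1 + V (h + 1) p.2))
          + ∑ p : Rw × X, Mstar h x (π h x) p * (V (h + 1) p.2 - Vpi (h + 1) p.2)) :=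
          Finset.sum_congr rfl fun x _ => by rw [key x]
      _ = EB h + ∑ x, d h x * ∑ p : Rw × X,
            Mstar h x (π h x) p * (V (h + 1) p.2 - Vpi (h + 1) p.2) := by
          simp only [mul_add, Finset.sum_add_distrib, hEB]
      _ = EB h + D (h + 1) := by rw [h2]
  have tele : ∀ n ≤ H, D (H - n) = ∑ i ∈ Finset.Ico (H - n) H, EB i := by
    intro n
    induction n with
    | zero => intro _; simp [hDH]
    | succ n ih =>
      intro hn
      have hn' : n ≤ H := Nat.le_of_succ_le hn
      have hlt : H - (n + 1) < H := by omega
      have hsucc : H - (n + 1) + 1 = H - n := by omega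
      rw [hstep _ hlt, hsucc, ih hn',
        Finset.sum_eq_sum_Ico_succ_bot (by omega : H - (n + 1) < H), hsucc]
  have hD0 : D 0 = ∑ i ∈ Finset.range H, EB i := by
    have := tele H le_rfl
    rwa [Nat.sub_self, ← Finset.range_eq_Ico] at this
  have hL : D 0 = (∑ x, P0 x * V 0 x) - (∑ x, P0 x * Vpi 0 x) := by
    show (∑ x, d 0 x * (V 0 x - Vpi 0 x)) = _
    rw [← Finset.sum_sub_distrib]
    exact Finset.sum_congr rfl fun x _ => by rw [hd0]; ring
  rw [← hL, hD0]
  apply Finset.sum_le_sum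
  intro h hh
  have hh' : h < H := Finset.mem_range.mp hh
  exact Finset.le_sup' (f := fun f => ∑ x, d h x * ∑ p : Rw × X,
      (M h x (π h x) p - Mstar h x (π h x) p) * f x (π h x) p.1 p.2) (hreal h hh')
end

section
/- In the optimistic elimination algorithm, suppose at every round t the empirical value estimate satisfies |v^{π^t} − v̂^{π^t}| ≤ ε/8 and the true model M* is never eliminated from the version space. Then at any round t, either (a) the algorithm does not terminate and there exists h ∈ [H] with average Bellman error E_B(M^t, M^t, h) ≥ 3ε/(8H), or (b) the algorithm terminates and the output policy π^t satisfies v^{π^t} ≥ v* − ε. -/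
/-- Terminate-or-explore: under an optimistic model choice with `M*` in the version
space and an `ε/8`-accurate value estimate, either the algorithm does not terminate and
some step has average Bellman error at least `3ε/(8H)`, or it terminates and the output
policy is `ε`-optimal. -/
theorem terminate_or_explore (Mod : Type*) (Mt : Finset Mod) (Mstar Mopt : Mod)
    (vM : Mod → ℝ) (vstar vpi vhat ε : ℝ) (H : ℕ) (EB : ℕ → ℝ)
    (hH : 0 < H) (hε : 0 < ε)
    (hMstar : Mstar ∈ Mt) (hMopt : Mopt ∈ Mt)
    (hopt : ∀ M ∈ Mt, vM M ≤ vM Mopt)            -- M^t is optimistic in the version space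
    (hvstar : vM Mstar = vstar)
    (hEBpos : ∀ h < H, 0 ≤ EB h)
    (hsim : vM Mopt - vpi = ∑ h ∈ Finset.range H, EB h)   -- simulation lemma
    (hest : |vpi - vhat| ≤ ε / 8) :
    (¬ |vhat - vM Mopt| ≤ ε / 2 → ∃ h < H, EB h ≥ 3 * ε / (8 * H)) ∧
    (|vhat - vM Mopt| ≤ ε / 2 → vpi ≥ vstar - ε) := by
  have hsum_nonneg : 0 ≤ vM Mopt - vpi := by
    rw [hsim]
    exact Finset.sum_nonneg fun h hh => hEBpos h (Finset.mem_range.mp hh)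
  have habs : |vpi - vM Mopt| = vM Mopt - vpi := by
    rw [abs_sub_comm, abs_of_nonneg hsum_nonneg]
  have hest' := abs_sub_abs_le_abs_sub vpi vhat  -- not needed maybe
  constructor
  · intro hterm
    push_neg at hterm
    have h1 : |vhat - vM Mopt| ≤ |vhat - vpi| + |vpi - vM Mopt| := abs_sub_le _ _ _
    have h2 : |vhat - vpi| ≤ ε / 8 := by rwa [abs_sub_comm]
    have hsum_gt : (3 : ℝ) * ε / 8 < vM Mopt - vpi := by
      rw [← habs]; linarith
    by_contra hcon
    push_neg at hcon
    have : ∑ h ∈ Finset.range H, EB h < ∑ h ∈ Finset.range H, (3 * ε / (8 * H)) := by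
      apply Finset.sum_lt_sum_of_nonempty
      · exact Finset.nonempty_range_iff.mpr hH.ne'
      · intro h hh
        exact hcon h (Finset.mem_range.mp hh)
    rw [Finset.sum_const, Finset.card_range, nsmul_eq_mul] at this
    have hHpos : (0 : ℝ) < H := Nat.cast_pos.mpr hH
    have : (H : ℝ) * (3 * ε / (8 * H)) = 3 * ε / 8 := by
      field_simp
    linarith [hsum_gt, hsim ▸ hsum_gt]
  · intro hterm
    have h2 : vpi ≥ vhat - ε / 8 := by
      have := abs_le.mp hest
      linarith [this.1, this.2]
    have h3 : vhat ≥ vM Mopt - ε / 2 := by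
      have := abs_le.mp hterm
      linarith [this.1, this.2]
    have h4 : vM Mopt ≥ vstar := hvstar ▸ hopt Mstar hMstar
    linarith
end

section
/- In a factored MDP with d state variables taking values in a finite set O, define W_F(M, M', h) = E_{x_h∼π_M, a_h∼U(A)}[ Σ_{i=1}^d ||P'^(i)(·|x_h[pa_i], a_h) − P*^(i)(·|x_h[pa_i], a_h)||_TV ]. Then W_F factorizes as an inner product: there exist maps ζ_h : M → R^m and χ_h : M → R^m with m = Σ_{i=1}^d K·|O|^{|pa_i|}, such that W_F(M, M', h) = ⟨ζ_h(M), χ_h(M')⟩ for all models M, M', where ζ_h(M) has entries P_h^{π_M}[x_h[pa_i] = u]/K (indexed by (i, a, u)) and χ_h(M') has entries ||P*^(i)(·|u, a) − P'^(i)(·|u, a)||_TV. -/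
lemma sum_comm3_aux {α β γ R : Type*} [Fintype α] [Fintype β] [Fintype γ]
    [AddCommMonoid R] (f : α → β → γ → R) :
    ∑ i : α, ∑ a : β, ∑ x : γ, f i a x = ∑ x : γ, ∑ a : β, ∑ i : α, f i a x := by
  rw [Finset.sum_comm]
  rw [show (∑ a : β, ∑ i : α, ∑ x : γ, f i a x) = ∑ a : β, ∑ x : γ, ∑ i : α, f i a x from
    Finset.sum_congr rfl fun a _ => Finset.sum_comm]
  exact Finset.sum_comm

/-- Low-rank factorization of the factored-MDP witnessed model misfit: the quantity
`W_F(M, M', h) = E_{x∼ρ_M, a∼U(A)}[Σ_i ‖P'⁽ⁱ⁾(·|x[pa_i],a) − P*⁽ⁱ⁾(·|x[pa_i],a)‖_TV]`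
equals the inner product `⟨ζ(M), χ(M')⟩`, where the coordinates are indexed by
`(i, a, u)` with `u` an assignment of the parents of variable `i`, the entries of
`ζ(M)` are `P^{π_M}[x[pa_i] = u]/K`, and the entries of `χ(M')` are the total-variation
distances `‖P*⁽ⁱ⁾(·|u,a) − P'⁽ⁱ⁾(·|u,a)‖_TV`. -/
theorem factored_misfit_factorization (d : ℕ) (O A Mod : Type*)
    [Fintype O] [DecidableEq O] [Fintype A] [Nonempty A]
    (pa : Fin d → Finset (Fin d))
    (ρ : Mod → (Fin d → O) → ℝ)                          -- roll-in distribution of π_M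
    (hρ0 : ∀ M x, 0 ≤ ρ M x) (hρ1 : ∀ M, ∑ x, ρ M x = 1)
    (Pstar : (i : Fin d) → ({j // j ∈ pa i} → O) → A → O → ℝ)       -- true CPTs
    (CPT : Mod → (i : Fin d) → ({j // j ∈ pa i} → O) → A → O → ℝ)   -- model CPTs
    (hPstar0 : ∀ i u a o, 0 ≤ Pstar i u a o) (hPstar1 : ∀ i u a, ∑ o, Pstar i u a o = 1)
    (hCPT0 : ∀ M i u a o, 0 ≤ CPT M i u a o) (hCPT1 : ∀ M i u a, ∑ o, CPT M i u a o = 1)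
    (M M' : Mod) :
    (1 / (Fintype.card A : ℝ)) * ∑ x : Fin d → O, ∑ a : A, ρ M x *
        ∑ i : Fin d, ∑ o : O,
          |CPT M' i (fun j => x j.1) a o - Pstar i (fun j => x j.1) a o| =
    ∑ z : Σ i : Fin d, A × ({j // j ∈ pa i} → O),
      ((∑ x ∈ Finset.univ.filter
          (fun x : Fin d → O => (fun j : {j // j ∈ pa z.1} => x j.1) = z.2.2), ρ M x) /
        (Fintype.card A : ℝ)) *
      (∑ o : O, |Pstar z.1 z.2.2 z.2.1 o - CPT M' z.1 z.2.2 z.2.1 o|) := by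

  classical
  have key : ∀ (i : Fin d) (a : A),
      (∑ u : ({j // j ∈ pa i} → O),
        ((∑ x ∈ Finset.univ.filter
            (fun x : Fin d → O => (fun j : {j // j ∈ pa i} => x j.1) = u), ρ M x) /
          (Fintype.card A : ℝ)) *
        (∑ o : O, |Pstar i u a o - CPT M' i u a o|))
      = ∑ x : Fin d → O, (ρ M x / (Fintype.card A : ℝ)) *
          ∑ o : O, |Pstar i (fun j => x j.1) a o - CPT M' i (fun j => x j.1) a o| := by
    intro i a
    rw [← Finset.sum_fiberwise Finset.univ
        (fun x : Fin d → O => fun j : {j // j ∈ pa i} => x j.1)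
        (fun x => (ρ M x / (Fintype.card A : ℝ)) *
          ∑ o, |Pstar i (fun j => x j.1) a o - CPT M' i (fun j => x j.1) a o|)]
    refine Finset.sum_congr rfl fun u _ => ?_
    rw [Finset.sum_div, Finset.sum_mul]
    refine Finset.sum_congr rfl fun x hx => ?_
    simp only [Finset.mem_filter] at hx
    rw [hx.2]
  conv_rhs => rw [← Finset.univ_sigma_univ, Finset.sum_sigma]
  calc (1 / (Fintype.card A : ℝ)) * ∑ x : Fin d → O, ∑ a : A, ρ M x *
        ∑ i : Fin d, ∑ o : O,
          |CPT M' i (fun j => x j.1) a o - Pstar i (fun j => x j.1) a o|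
      = ∑ i : Fin d, ∑ a : A, ∑ x : Fin d → O, (ρ M x / (Fintype.card A : ℝ)) *
          ∑ o : O, |Pstar i (fun j => x j.1) a o - CPT M' i (fun j => x j.1) a o| := by
        rw [sum_comm3_aux (fun (i : Fin d) (a : A) (x : Fin d → O) =>
          (ρ M x / (Fintype.card A : ℝ)) *
            ∑ o : O, |Pstar i (fun j => x j.1) a o - CPT M' i (fun j => x j.1) a o|)]
        rw [Finset.mul_sum]
        refine Finset.sum_congr rfl fun x _ => ?_
        rw [Finset.mul_sum]
        refine Finset.sum_congr rfl fun a _ => ?_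
        have h1 : ∀ i : Fin d,
            (∑ o : O, |Pstar i (fun j => x j.1) a o - CPT M' i (fun j => x j.1) a o|)
            = ∑ o : O, |CPT M' i (fun j => x j.1) a o - Pstar i (fun j => x j.1) a o| :=
          fun i => Finset.sum_congr rfl fun o _ => abs_sub_comm _ _
        simp only [h1]
        rw [← Finset.mul_sum]
        ring
    _ = _ := by
        refine Finset.sum_congr rfl fun i _ => ?_
        rw [Fintype.sum_prod_type]
        exact Finset.sum_congr rfl fun a _ => (key i a).symm
end

section
/- Suppose for conditional exponential family models the inequality (γ/√β)·E_{x_h∼π_M, a_h∼π_{M'}}[√(KL(M'_{x_h,a_h} || M*_{x_h,a_h}))] ≤ W(M, M', h) holds, where 0 < γ ≤ β bound the eigenvalues of the Hessian of the log-partition function. Then the witnessed model misfit dominates the average Bellman error up to a constant: (γ/(2√(2β)))·E_B(M, M', h) ≤ W(M, M', h), assuming |r + V_M(x')| ≤ 2 for all models M. -/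
/-
Pinsker's inequality `(∑ |p - q|)² ≤ 2 KL(p‖q)` turns the Hölder bound
`∑ (M' - M*) f ≤ 2 ∑ |M' - M*|` into `∑ (M' - M*) f ≤ 2√2 · √KL` at every `(x_h, a_h)`;
averaging over `ρ` and using `γ / (2√(2β)) · 2√2 = γ / √β` reduces the claim to the hypothesis.
Pinsker follows from the pointwise bound `p log (p / q) ≥ p - q + (3/2) (p - q)² / (p + 2q)`,
summed and combined with Cauchy–Schwarz against the weights `p + 2q`, of total mass 3.
With `t = p / q` that bound reads `log t ≥ (t - 1)(5t + 1) / (2t(t + 2))`, and the gap between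
the two sides has derivative `(t - 1)³ / (t²(t + 2)²)`, so it is minimal, and zero, at `t = 1`.
-/

open Real Finset

lemma hasDerivAt_log_sub_div {t : ℝ} (ht : 0 < t) :
    HasDerivAt (fun t => log t - (t - 1) * (5 * t + 1) / (2 * t * (t + 2)))
      ((t - 1) ^ 3 / (t ^ 2 * (t + 2) ^ 2)) t := by
  have hden : 2 * t * (t + 2) ≠ 0 := by positivity
  have hnum : HasDerivAt (fun t => (t - 1) * (5 * t + 1)) (1 * (5 * t + 1) + (t - 1) * 5) t :=
    (((hasDerivAt_id t).sub_const 1).mul (((hasDerivAt_id t).const_mul 5).add_const 1)).congr_deriv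
      (by simp)
  have hd : HasDerivAt (fun t => 2 * t * (t + 2)) (2 * (t + 2) + 2 * t * 1) t :=
    (((hasDerivAt_id t).const_mul 2).mul ((hasDerivAt_id t).add_const 2)).congr_deriv (by simp)
  refine ((hasDerivAt_log ht.ne').sub (hnum.div hd hden)).congr_deriv ?_
  field_simp
  ring

lemma sub_one_mul_five_mul_add_one_div_le_log {t : ℝ} (ht : 0 < t) :
    (t - 1) * (5 * t + 1) / (2 * t * (t + 2)) ≤ log t := by
  set ψ : ℝ → ℝ := fun t => log t - (t - 1) * (5 * t + 1) / (2 * t * (t + 2))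
  have hψ : ∀ s ∈ Set.Ioi (0 : ℝ), HasDerivAt ψ ((s - 1) ^ 3 / (s ^ 2 * (s + 2) ^ 2)) s :=
    fun s hs => hasDerivAt_log_sub_div hs
  have hcont : ContinuousOn ψ (Set.Ioi 0) := fun s hs => (hψ s hs).continuousAt.continuousWithinAt
  suffices ψ 1 ≤ ψ t by simpa [ψ] using this
  rcases le_total 1 t with h1 | h1
  · refine monotoneOn_of_hasDerivWithinAt_nonneg (convex_Ici 1)
      (hcont.mono fun s hs => Set.mem_Ioi.2 (zero_lt_one.trans_le hs))
      (fun s hs => (hψ s ?_).hasDerivWithinAt) (fun s hs => ?_) Set.self_mem_Ici h1 h1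
    · rw [interior_Ici] at hs; exact Set.mem_Ioi.2 (zero_lt_one.trans hs)
    · rw [interior_Ici] at hs
      have : 0 ≤ s - 1 := by linarith [Set.mem_Ioi.1 hs]
      positivity
  · refine antitoneOn_of_hasDerivWithinAt_nonpos (convex_Ioc 0 1)
      (hcont.mono Set.Ioc_subset_Ioi_self)
      (fun s hs => (hψ s ?_).hasDerivWithinAt) (fun s hs => ?_) ⟨ht, h1⟩ ⟨zero_lt_one, le_rfl⟩ h1
    · rw [interior_Ioc] at hs; exact hs.1
    · rw [interior_Ioc] at hs
      exact div_nonpos_of_nonpos_of_nonneg (Odd.pow_nonpos (by decide) (by linarith [hs.2]))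
        (by positivity)

lemma sub_add_div_le_mul_log {p q : ℝ} (hp : 0 ≤ p) (hq : 0 ≤ q) (hpq : q = 0 → p = 0) :
    p - q + 3 / 2 * ((p - q) ^ 2 / (p + 2 * q)) ≤ p * log (p / q) := by
  rcases hq.eq_or_lt with rfl | hq
  · simp [hpq rfl]
  rcases hp.eq_or_lt with rfl | hp
  · have : 3 / 2 * ((0 - q) ^ 2 / (0 + 2 * q)) = 3 * q / 4 := by field_simp; ring
    simp only [this, zero_mul]
    linarith
  have key := mul_le_mul_of_nonneg_left
    (sub_one_mul_five_mul_add_one_div_le_log (div_pos hp hq)) hp.le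
  refine le_of_eq_of_le ?_ key
  field_simp
  ring

theorem sq_sum_abs_sub_le_two_mul_sum_mul_log {Y : Type*} [Fintype Y] {p q : Y → ℝ}
    (hp : ∀ y, 0 ≤ p y) (hp1 : ∑ y, p y = 1) (hq : ∀ y, 0 ≤ q y) (hq1 : ∑ y, q y = 1)
    (hpq : ∀ y, q y = 0 → p y = 0) :
    (∑ y, |p y - q y|) ^ 2 ≤ 2 * ∑ y, p y * log (p y / q y) := by
  have cauchySchwarz := sum_sq_le_sum_mul_sum_of_sq_le_mul univ
    (r := fun y => |p y - q y|) (f := fun y => (p y - q y) ^ 2 / (p y + 2 * q y))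
    (g := fun y => p y + 2 * q y)
    (fun y _ => div_nonneg (sq_nonneg _) (by linarith [hp y, hq y]))
    (fun y _ => by linarith [hp y, hq y]) fun y _ => by
      rw [sq_abs, div_mul_cancel_of_imp]
      intro h
      have : p y = q y := by linarith [hp y, hq y]
      simp [this]
  have hmass : ∑ y, (p y + 2 * q y) = 3 := by
    rw [sum_add_distrib, ← mul_sum, hp1, hq1]; norm_num
  have hlocal : ∑ y, (p y - q y + 3 / 2 * ((p y - q y) ^ 2 / (p y + 2 * q y))) ≤
      ∑ y, p y * log (p y / q y) :=
    sum_le_sum fun y _ => sub_add_div_le_mul_log (hp y) (hq y) (hpq y)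
  rw [sum_add_distrib, sum_sub_distrib, ← mul_sum, hp1, hq1] at hlocal
  rw [hmass] at cauchySchwarz
  linarith

lemma sum_sub_mul_le_mul_sum_abs_sub {Y : Type*} [Fintype Y] {p q f : Y → ℝ} {c : ℝ}
    (hf : ∀ y, |f y| ≤ c) : ∑ y, (p y - q y) * f y ≤ c * ∑ y, |p y - q y| := by
  rw [mul_sum]
  refine sum_le_sum fun y _ => ?_
  calc (p y - q y) * f y ≤ |p y - q y| * |f y| := (le_abs_self _).trans (abs_mul _ _).le
    _ ≤ c * |p y - q y| := by rw [mul_comm]; gcongr; exact hf y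

theorem exp_family_bellman_domination_general (X A Y : Type*)
    [Fintype X] [Fintype A] [Fintype Y]
    (ρ : X × A → ℝ)                                  -- joint law of (x_h, a_h)
    (hρ0 : ∀ p, 0 ≤ ρ p)
    (M' Mstar : X × A → Y → ℝ)                        -- conditional laws of (r, x')
    (hM'0 : ∀ p y, 0 ≤ M' p y) (hM'1 : ∀ p, ∑ y, M' p y = 1)
    (hMs0 : ∀ p y, 0 ≤ Mstar p y) (hMs1 : ∀ p, ∑ y, Mstar p y = 1)
    (habs : ∀ p y, Mstar p y = 0 → M' p y = 0)        -- KL well-defined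
    (f : Y → ℝ) (hf : ∀ y, |f y| ≤ 2)                 -- f(r,x') = r + V_M(x'), |f| ≤ 2
    (γ β W : ℝ) (hγ : 0 < γ)
    (hKL : (γ / Real.sqrt β) *
        ∑ p, ρ p * Real.sqrt (∑ y, M' p y * Real.log (M' p y / Mstar p y)) ≤ W) :
    (γ / (2 * Real.sqrt (2 * β))) *
        (∑ p, ρ p * ∑ y, (M' p y - Mstar p y) * f y) ≤ W := by
  have hbellman (p : X × A) : ∑ y, (M' p y - Mstar p y) * f y ≤
      2 * √2 * √(∑ y, M' p y * log (M' p y / Mstar p y)) :=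
    calc ∑ y, (M' p y - Mstar p y) * f y ≤ 2 * ∑ y, |M' p y - Mstar p y| :=
          sum_sub_mul_le_mul_sum_abs_sub hf
      _ ≤ 2 * √(2 * ∑ y, M' p y * log (M' p y / Mstar p y)) := by
          gcongr
          exact le_sqrt_of_sq_le <| sq_sum_abs_sub_le_two_mul_sum_mul_log (hM'0 p) (hM'1 p)
            (hMs0 p) (hMs1 p) (habs p)
      _ = 2 * √2 * √(∑ y, M' p y * log (M' p y / Mstar p y)) := by
          rw [sqrt_mul zero_le_two, mul_assoc]
  have hconst : γ / (2 * √(2 * β)) * (2 * √2) = γ / √β := by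
    rw [sqrt_mul zero_le_two, ← mul_assoc 2, div_mul_eq_mul_div, mul_comm γ,
      mul_div_mul_left _ _ (by positivity)]
  calc γ / (2 * √(2 * β)) * ∑ p, ρ p * ∑ y, (M' p y - Mstar p y) * f y
      ≤ γ / (2 * √(2 * β)) *
          (2 * √2 * ∑ p, ρ p * √(∑ y, M' p y * log (M' p y / Mstar p y))) := by
        rw [mul_sum _ _ (2 * √2)]
        refine mul_le_mul_of_nonneg_left (sum_le_sum fun p _ => ?_) (by positivity)
        rw [mul_left_comm]
        exact mul_le_mul_of_nonneg_left (hbellman p) (hρ0 p)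
    _ = γ / √β * ∑ p, ρ p * √(∑ y, M' p y * log (M' p y / Mstar p y)) := by
        rw [← mul_assoc, hconst]
    _ ≤ W := hKL

/-- Bellman domination for conditional exponential families: given the KL-based lower
bound `(γ/√β)·E[√KL(M'‖M*)] ≤ W` on the witnessed model misfit (eigenvalues of the
log-partition Hessian in `[γ, β]`), and the test function `f = r + V_M(x')` bounded by
`2`, the misfit dominates the average Bellman error:
`(γ/(2√(2β)))·E_B ≤ W`. -/
theorem exp_family_bellman_domination (X A Y : Type*)
    [Fintype X] [Fintype A] [Fintype Y]
    (ρ : X × A → ℝ)                                  -- joint law of (x_h, a_h)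
    (hρ0 : ∀ p, 0 ≤ ρ p) (hρ1 : ∑ p, ρ p = 1)
    (M' Mstar : X × A → Y → ℝ)                        -- conditional laws of (r, x')
    (hM'0 : ∀ p y, 0 ≤ M' p y) (hM'1 : ∀ p, ∑ y, M' p y = 1)
    (hMs0 : ∀ p y, 0 ≤ Mstar p y) (hMs1 : ∀ p, ∑ y, Mstar p y = 1)
    (habs : ∀ p y, Mstar p y = 0 → M' p y = 0)        -- KL well-defined
    (f : Y → ℝ) (hf : ∀ y, |f y| ≤ 2)                 -- f(r,x') = r + V_M(x'), |f| ≤ 2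
    (γ β W : ℝ) (hγ : 0 < γ) (hγβ : γ ≤ β)
    (hKL : (γ / Real.sqrt β) *
        ∑ p, ρ p * Real.sqrt (∑ y, M' p y * Real.log (M' p y / Mstar p y)) ≤ W) :
    (γ / (2 * Real.sqrt (2 * β))) *
        (∑ p, ρ p * ∑ y, (M' p y - Mstar p y) * f y) ≤ W :=
  exp_family_bellman_domination_general X A Y ρ hρ0 M' Mstar hM'0 hM'1 hMs0 hMs1 habs f hf γ β W hγ
    hKL
end
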